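/- Let K be a field and n, m positive integers with n+1 ≤ m ≤ 2n−1. Let Mat_n(K) denote the n×n matrices over K, and for X, Z ∈ Mat_n(K) write x_{k,l}, z_{k,l} for their entries. Then the map T̃_{n,m} : (Mat_n(K))³ → (Mat_n(K))³ sending (X, Y, Z) to (X, Ŷ, Z), where Ŷ is the matrix with entries ŷ_{k,l} = y_{k,l} + Σ_{i=1}^{2n−m} x_{k, m−n+i} z_{i, l}, satisfies the tetrahedron equation. -/
import Mathlib


/-- `T` acting on factors 1,2,3 of the sixfold Cartesian product `D⁶`. -/
def tetra123 {D : Type*} (T : D × D × D → D × D × D) :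
    D × D × D × D × D × D → D × D × D × D × D × D :=
  fun q =>
    match q with
    | (x, y, z, r, s, t) =>
      ((T (x, y, z)).1, (T (x, y, z)).2.1, (T (x, y, z)).2.2, r, s, t)

/-- `T` acting on factors 1,4,5 of the sixfold Cartesian product `D⁶`. -/
def tetra145 {D : Type*} (T : D × D × D → D × D × D) :
    D × D × D × D × D × D → D × D × D × D × D × D :=
  fun q =>
    match q with
    | (x, y, z, r, s, t) =>
      ((T (x, r, s)).1, y, z, (T (x, r, s)).2.1, (T (x, r, s)).2.2, t)

/-- `T` acting on factors 2,4,6 of the sixfold Cartesian product `D⁶`. -/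
def tetra246 {D : Type*} (T : D × D × D → D × D × D) :
    D × D × D × D × D × D → D × D × D × D × D × D :=
  fun q =>
    match q with
    | (x, y, z, r, s, t) =>
      (x, (T (y, r, t)).1, z, (T (y, r, t)).2.1, s, (T (y, r, t)).2.2)

/-- `T` acting on factors 3,5,6 of the sixfold Cartesian product `D⁶`. -/
def tetra356 {D : Type*} (T : D × D × D → D × D × D) :
    D × D × D × D × D × D → D × D × D × D × D × D :=
  fun q =>
    match q with
    | (x, y, z, r, s, t) =>
      (x, y, (T (z, s, t)).1, r, (T (z, s, t)).2.1, (T (z, s, t)).2.2)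

/-- The (Zamolodchikov) tetrahedron equation for a map `T : D³ → D³`. -/
def IsTetrahedronMap {D : Type*} (T : D × D × D → D × D × D) : Prop :=
  tetra123 T ∘ tetra145 T ∘ tetra246 T ∘ tetra356 T =
    tetra356 T ∘ tetra246 T ∘ tetra145 T ∘ tetra123 T

theorem stmt_8 (K : Type*) [Field K] (n m : ℕ) (hn : 0 < n)
    (hm1 : n + 1 ≤ m) (hm2 : m ≤ 2 * n - 1) :
    IsTetrahedronMap (fun p :
        Matrix (Fin n) (Fin n) K × Matrix (Fin n) (Fin n) K × Matrix (Fin n) (Fin n) K =>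
      (p.1,
       Matrix.of (fun k l => p.2.1 k l + ∑ i : Fin (2 * n - m),
         p.1 k ⟨m - n + i.1, by have := i.isLt; omega⟩ *
           p.2.2 ⟨i.1, by have := i.isLt; omega⟩ l),
       p.2.2)) := by
  unfold IsTetrahedronMap tetra123 tetra145 tetra246 tetra356
  funext p
  obtain ⟨x, y, z, r, s, t⟩ := p
  simp only [Function.comp_apply]
  refine Prod.ext rfl (Prod.ext ?_ (Prod.ext rfl (Prod.ext ?_ (Prod.ext rfl rfl))))
  · ext k l
    simp [Matrix.of_apply]
  · ext k l
    simp only [Matrix.of_apply, Finset.mul_sum, Finset.sum_mul, mul_add, add_mul,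
      Finset.sum_add_distrib, mul_assoc]
    rw [Finset.sum_comm]
    ring
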